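/- Given integers r1, r2, define a1 = (r1^2+r2^2)(r1^2-4r1r2+r2^2)(r1^6-4r1^5r2+19r1^4r2^2-40r1^3r2^3+19r1^2r2^4-4r1r2^5+r2^6); a2 = -(r1^2+r2^2)(r1^2-4r1r2+r2^2)(r1^6-8r1^5r2+35r1^4r2^2-48r1^3r2^3+35r1^2r2^4-8r1r2^5+r2^6); a3 = a4 = (r1-r2)^2(r1^8-8r1^7r2+36r1^6r2^2-88r1^5r2^3+198r1^4r2^4-88r1^3r2^5+36r1^2r2^6-8r1r2^7+r2^8). Let K = 32r1^3r2^3(r1-r2)^2(r1^2+r2^2)^2(r1^2-4r1r2+r2^2)^2(r1^4-4r1^3r2+10r1^2r2^2-4r1r2^3+r2^4), F = r1^8-8r1^7r2+36r1^6r2^2-88r1^5r2^3+198r1^4r2^4-88r1^3r2^5+36r1^2r2^6-8r1r2^7+r2^8, E = r1^8-8r1^7r2+52r1^6r2^2-152r1^5r2^3+230r1^4r2^4-152r1^3r2^5+52r1^2r2^6-8r1r2^7+r2^8, and Q = r1^4-4r1^3r2+10r1^2r2^2-4r1r2^3+r2^4. Then 16·K^2·F^2·E^2 = (a1·a2+a3·a4)(a1·a3+a2·a4)(a1·a4+a2·a3)·(16r1r2Q)^2;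 equivalently, when r1r2Q is nonzero, the circumradius R = F·E/(16r1r2Q) of the first quadrilateral satisfies (4KR)^2 = (a1a2+a3a4)(a1a3+a2a4)(a1a4+a2a3). -/

import Mathlib

theorem section21_first_quadrilateral_circumradius (r1 r2 : ℤ) (a1 a2 a3 a4 K F E Q : ℤ)
    (ha1 : a1 = (r1 ^ 2 + r2 ^ 2) * (r1 ^ 2 - 4 * r1 * r2 + r2 ^ 2)
      * (r1 ^ 6 - 4 * r1 ^ 5 * r2 + 19 * r1 ^ 4 * r2 ^ 2 - 40 * r1 ^ 3 * r2 ^ 3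
        + 19 * r1 ^ 2 * r2 ^ 4 - 4 * r1 * r2 ^ 5 + r2 ^ 6))
    (ha2 : a2 = -((r1 ^ 2 + r2 ^ 2) * (r1 ^ 2 - 4 * r1 * r2 + r2 ^ 2)
      * (r1 ^ 6 - 8 * r1 ^ 5 * r2 + 35 * r1 ^ 4 * r2 ^ 2 - 48 * r1 ^ 3 * r2 ^ 3
        + 35 * r1 ^ 2 * r2 ^ 4 - 8 * r1 * r2 ^ 5 + r2 ^ 6)))
    (ha3 : a3 = (r1 - r2) ^ 2
      * (r1 ^ 8 - 8 * r1 ^ 7 * r2 + 36 * r1 ^ 6 * r2 ^ 2 - 88 * r1 ^ 5 * r2 ^ 3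
        + 198 * r1 ^ 4 * r2 ^ 4 - 88 * r1 ^ 3 * r2 ^ 5 + 36 * r1 ^ 2 * r2 ^ 6
        - 8 * r1 * r2 ^ 7 + r2 ^ 8))
    (ha4 : a4 = a3)
    (hK : K = 32 * r1 ^ 3 * r2 ^ 3 * (r1 - r2) ^ 2 * (r1 ^ 2 + r2 ^ 2) ^ 2
      * (r1 ^ 2 - 4 * r1 * r2 + r2 ^ 2) ^ 2
      * (r1 ^ 4 - 4 * r1 ^ 3 * r2 + 10 * r1 ^ 2 * r2 ^ 2 - 4 * r1 * r2 ^ 3 + r2 ^ 4))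
    (hE : E = r1 ^ 8 - 8 * r1 ^ 7 * r2 + 52 * r1 ^ 6 * r2 ^ 2 - 152 * r1 ^ 5 * r2 ^ 3
      + 230 * r1 ^ 4 * r2 ^ 4 - 152 * r1 ^ 3 * r2 ^ 5 + 52 * r1 ^ 2 * r2 ^ 6
      - 8 * r1 * r2 ^ 7 + r2 ^ 8)
    (hF : F = r1 ^ 8 - 8 * r1 ^ 7 * r2 + 36 * r1 ^ 6 * r2 ^ 2 - 88 * r1 ^ 5 * r2 ^ 3
      + 198 * r1 ^ 4 * r2 ^ 4 - 88 * r1 ^ 3 * r2 ^ 5 + 36 * r1 ^ 2 * r2 ^ 6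
      - 8 * r1 * r2 ^ 7 + r2 ^ 8)
    (hQ : Q = r1 ^ 4 - 4 * r1 ^ 3 * r2 + 10 * r1 ^ 2 * r2 ^ 2 - 4 * r1 * r2 ^ 3 + r2 ^ 4) :
    16 * K ^ 2 * F ^ 2 * E ^ 2
      = (a1 * a2 + a3 * a4) * (a1 * a3 + a2 * a4) * (a1 * a4 + a2 * a3)
        * (16 * r1 * r2 * Q) ^ 2 ∧
    (r1 * r2 * Q ≠ 0 →
      ∀ R : ℚ, R = (F : ℚ) * (E : ℚ) / (16 * (r1 : ℚ) * (r2 : ℚ) * (Q : ℚ)) →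
        (4 * (K : ℚ) * R) ^ 2
          = ((a1 : ℚ) * a2 + (a3 : ℚ) * a4) * ((a1 : ℚ) * a3 + (a2 : ℚ) * a4)
            * ((a1 : ℚ) * a4 + (a2 : ℚ) * a3)) := by
  subst ha1 ha2 ha4 ha3 hK hE hF hQ
  constructor
  · ring
  · intro h R hR
    have h' : 16 * (r1:ℚ) * r2 * (r1 ^ 4 - 4 * r1 ^ 3 * r2 + 10 * r1 ^ 2 * r2 ^ 2 - 4 * r1 * r2 ^ 3 + r2 ^ 4) ≠ 0 := by
      intro hc
      apply h
      have : ((r1:ℚ) * r2 * (r1 ^ 4 - 4 * r1 ^ 3 * r2 + 10 * r1 ^ 2 * r2 ^ 2 - 4 * r1 * r2 ^ 3 + r2 ^ 4)) = 0 := by linear_combination hc / 16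
      exact_mod_cast (by push_cast; linear_combination this : ((r1 * r2 * (r1 ^ 4 - 4 * r1 ^ 3 * r2 + 10 * r1 ^ 2 * r2 ^ 2 - 4 * r1 * r2 ^ 3 + r2 ^ 4) : ℤ) : ℚ) = 0)
    subst hR
    push_cast
    rw [mul_div_assoc', div_pow, div_eq_iff (pow_ne_zero 2 h')]
    ring
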